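/- Let a = (a_1, …, a_n) be a non-decreasing sequence of real numbers, b = (b_1, …, b_n) a sequence of real numbers, and τ > 0. Suppose π is a permutation of {1, …, n} such that π(i) < π(j) whenever b_j − b_i > τ. Then for all i ∈ {1, …, n}, |a_{π(i)} − a_i| ≤ τ + 2·max_k |b_k − a_k|. -/
import Mathlib


/-- Lemma on permutations: if `a` is non-decreasing and `π` respects the order of `b`
up to tolerance `τ`, then `|a (π i) − a i| ≤ τ + 2‖b − a‖_∞`. -/
theorem perm_close_of_approx_order
    {n : ℕ} (hn : 0 < n) (a b : Fin n → ℝ) (ha : Monotone a)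
    (τ : ℝ) (hτ : 0 < τ) (π : Equiv.Perm (Fin n))
    (hπ : ∀ i j : Fin n, b j - b i > τ → π i < π j) :
    ∀ i : Fin n,
      |a (π i) - a i| ≤
        τ + 2 * Finset.univ.sup'
          (by exact ⟨⟨0, hn⟩, Finset.mem_univ _⟩)
          (fun k => |b k - a k|) := by
  intro i
  set ε := Finset.univ.sup' (⟨⟨0, hn⟩, Finset.mem_univ _⟩)
      (fun k => |b k - a k|) with hεdef
  have hle : ∀ k, |b k - a k| ≤ ε := fun k => by
    rw [hεdef]
    exact Finset.le_sup' (fun k => |b k - a k|) (Finset.mem_univ k)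
  have hε0 : 0 ≤ ε := le_trans (abs_nonneg _) (hle ⟨0, hn⟩)
  rw [abs_le]
  constructor
  · -- lower bound: a i - a (π i) ≤ τ + 2ε
    by_contra h
    push_neg at h
    set j := π i with hj
    have hji : j < i := by
      by_contra hc
      push_neg at hc
      have := ha hc
      nlinarith
    have key : ∀ k, k ≤ j → π k < π i := by
      intro k hk
      apply hπ
      have h1 := hle k
      have h2 := hle i
      have h3 : a k ≤ a j := ha hk
      rw [abs_le] at h1 h2
      nlinarith
    have hmaps : ∀ k ∈ insert i (Finset.Iic j), π k ∈ Finset.Iic j := by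
      intro k hk
      rcases Finset.mem_insert.mp hk with rfl | hk
      · simp [← hj]
      · exact Finset.mem_Iic.mpr (le_of_lt (key k (Finset.mem_Iic.mp hk)))
    have hinj : Set.InjOn π (insert i (Finset.Iic j) : Finset (Fin n)) :=
      fun x _ y _ hxy => π.injective hxy
    have hcard := Finset.card_le_card_of_injOn π hmaps hinj
    rw [Finset.card_insert_of_notMem (by simp [Finset.mem_Iic, not_le, hji])] at hcard
    simp [Fin.card_Iic] at hcard
  · -- upper bound: a (π i) - a i ≤ τ + 2ε
    by_contra h
    push_neg at h
    set j := π i with hj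
    have hij : i < j := by
      by_contra hc
      push_neg at hc
      have := ha hc
      nlinarith
    have key : ∀ k, j ≤ k → π i < π k := by
      intro k hk
      apply hπ
      have h1 := hle k
      have h2 := hle i
      have h3 : a j ≤ a k := ha hk
      rw [abs_le] at h1 h2
      nlinarith
    have hmaps : ∀ k ∈ insert i (Finset.Ici j), π k ∈ Finset.Ici j := by
      intro k hk
      rcases Finset.mem_insert.mp hk with rfl | hk
      · simp [← hj]
      · exact Finset.mem_Ici.mpr (le_of_lt (key k (Finset.mem_Ici.mp hk)))
    have hinj : Set.InjOn π (insert i (Finset.Ici j) : Finset (Fin n)) :=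
      fun x _ y _ hxy => π.injective hxy
    have hcard := Finset.card_le_card_of_injOn π hmaps hinj
    rw [Finset.card_insert_of_notMem (by simp [Finset.mem_Ici, not_le, hij])] at hcard
    simp [Fin.card_Ici] at hcard
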